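/- Let h: F_m → F_n be an injective homomorphism of finitely generated free groups (each with a fixed basis), and let φ, ψ be injective endomorphisms of F_m, F_n respectively with h ∘ φ = ψ ∘ h. Then h(fix(φ)) ⊆ fix(ψ), and the map W ↦ h̄(W) := lim_i h(W_i) is a well-defined injection from the set of attracting fixed words of φ into the set of attracting fixed words of ψ. -/

import Mathlib

open Filter

namespace ZZFix

/-- A letter: a basis element together with a sign. -/
abbrev Letter (α : Type*) := α × Bool

/-- The inverse letter. -/
def linv {α : Type*} (l : Letter α) : Letter α := (l.1, !l.2)

/-- An infinite reduced word: a sequence of letters with no adjacent cancellation. -/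
def InfWord (α : Type*) : Type _ := {w : ℕ → Letter α // ∀ i, w (i + 1) ≠ linv (w i)}

/-- The length-`i` prefix of an infinite reduced word, as a list of letters. -/
def prefixList {α : Type*} (W : InfWord α) (i : ℕ) : List (Letter α) :=
  (List.range i).map W.1

/-- The length-`i` prefix of an infinite reduced word, as an element of the free group. -/
def wordPrefix {α : Type*} (W : InfWord α) (i : ℕ) : FreeGroup α :=
  FreeGroup.mk (prefixList W i)

/-- Length of the longest common prefix of two lists. -/
def commonPrefixLength {β : Type*} [DecidableEq β] : List β → List β → ℕ
  | a :: as, b :: bs => if a = b then commonPrefixLength as bs + 1 else 0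
  | _, _ => 0

variable {α : Type*} [DecidableEq α]

/-- `|W ∧ g|` for an infinite reduced word `W` and a finite reduced word `g`. -/
def wedgeF (W : InfWord α) (g : FreeGroup α) : ℕ :=
  commonPrefixLength (prefixList W (FreeGroup.toWord g).length) (FreeGroup.toWord g)

/-- `|g ∧ h|` for finite reduced words. -/
def wedgeFF (g h : FreeGroup α) : ℕ :=
  commonPrefixLength (FreeGroup.toWord g) (FreeGroup.toWord h)

/-- `|W ∧ V|` for infinite reduced words, valued in `ℕ∞` (it is `⊤` iff `W = V`). -/
noncomputable def wedgeI {α : Type*} (W V : InfWord α) : ℕ∞ :=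
  sSup ((fun i : ℕ => (i : ℕ∞)) '' {i : ℕ | prefixList W i = prefixList V i})

/-- A sequence of group elements converges to the infinite reduced word `W`
(in the initial segment metric on `F ⊔ ∂F`). -/
def ConvergesTo (u : ℕ → FreeGroup α) (W : InfWord α) : Prop :=
  Tendsto (fun i => wedgeF W (u i)) atTop atTop

/-- `W` is a fixed infinite word of `φ`: `|W ∧ φ(W_i)| → ∞`. -/
def IsFixedInfWord (φ : FreeGroup α →* FreeGroup α) (W : InfWord α) : Prop :=
  Tendsto (fun i => wedgeF W (φ (wordPrefix W i))) atTop atTop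

/-- `W` is an attracting fixed word of `φ`: it is fixed and `|W ∧ φ(W_i)| - i → +∞`. -/
def IsAttractingFixedWord (φ : FreeGroup α →* FreeGroup α) (W : InfWord α) : Prop :=
  IsFixedInfWord φ W ∧
    Tendsto (fun i => (wedgeF W (φ (wordPrefix W i)) : ℤ) - (i : ℤ)) atTop atTop

/-- The fixed subgroup of an endomorphism. -/
def fixedSubgroup {G : Type*} [Group G] (φ : G →* G) : Subgroup G where
  carrier := {g | φ g = g}
  one_mem' := map_one φ
  mul_mem' := by
    intro a b ha hb
    simp only [Set.mem_setOf_eq] at *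
    rw [map_mul, ha, hb]
  inv_mem' := by
    intro a ha
    simp only [Set.mem_setOf_eq] at *
    rw [map_inv, ha]

/-- The rank (minimal number of generators) of a subgroup, valued in `ℕ∞`. -/
noncomputable def grpRank {G : Type*} [Group G] (H : Subgroup G) : ℕ∞ :=
  sInf {k : ℕ∞ | ∃ S : Finset G, Subgroup.closure (S : Set G) = H ∧ (S.card : ℕ∞) = k}

/-- Two infinite reduced words are equivalent (w.r.t. `φ`) if `W' = U·W` for some
`U ∈ fix(φ)`, i.e. the reduced products `U·W_i` converge to `W'`. -/
def EquivFixedWords (φ : FreeGroup α →* FreeGroup α) (W W' : InfWord α) : Prop :=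
  ∃ U ∈ fixedSubgroup φ, ConvergesTo (fun i => U * wordPrefix W i) W'

/-- `a(φ)`: the number of equivalence classes of attracting fixed words, in `ℕ∞`. -/
noncomputable def aCard (φ : FreeGroup α →* FreeGroup α) : ℕ∞ :=
  ENat.card (Quot fun (W W' : {W : InfWord α // IsAttractingFixedWord φ W}) =>
    EquivFixedWords φ W.1 W'.1)

/-- The inner automorphism `i_c : g ↦ c g c⁻¹`, as a monoid homomorphism. -/
def innerAut {G : Type*} [Group G] (c : G) : G →* G := (MulAut.conj c).toMonoidHom

/-- Two endomorphisms are similar if `ψ₂ = i_c ∘ ψ₁ ∘ i_c⁻¹` for some `c`. -/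
def Similar {G : Type*} [Group G] (ψ₁ ψ₂ : G →* G) : Prop :=
  ∃ c : G, ψ₂ = ((innerAut c).comp ψ₁).comp (innerAut c⁻¹)

/-- The trace of the endomorphism of `ℤⁿ` induced by `φ` on the abelianization. -/
def abTrace {n : ℕ} (φ : FreeGroup (Fin n) →* FreeGroup (Fin n)) : ℤ :=
  ∑ i : Fin n, Multiplicative.toAdd
    ((FreeGroup.lift fun k => Multiplicative.ofAdd (if k = i then (1 : ℤ) else 0))
      (φ (FreeGroup.of i)))

/-- The constant infinite reduced word `l l l ⋯`. -/
def constWord {α : Type*} (l : Letter α) : InfWord α :=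
  ⟨fun _ => l, fun _ h => by
    have h2 := congrArg Prod.snd h
    simp [linv] at h2⟩

/-- `W` is an attracting fixed point of `φ`: it is fixed, and there is `i₀` such that
every finite or infinite reduced word `V` with `|W ∧ V| ≥ i₀` satisfies
`|W ∧ φᵖ(V)| → ∞` as `p → ∞`. -/
def IsAttractingFixedPoint (φ : FreeGroup α →* FreeGroup α) (W : InfWord α) : Prop :=
  IsFixedInfWord φ W ∧
    ∃ i₀ : ℕ,
      (∀ g : FreeGroup α, i₀ ≤ wedgeF W g →
        Tendsto (fun p => wedgeF W ((⇑φ)^[p] g)) atTop atTop) ∧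
      (∀ V : InfWord α, (i₀ : ℕ∞) ≤ wedgeI W V →
        ∀ Vs : ℕ → InfWord α, Vs 0 = V →
          (∀ p, ConvergesTo (fun i => φ (wordPrefix (Vs p) i)) (Vs (p + 1))) →
          Tendsto (fun p => wedgeI W (Vs p)) atTop atTop)

open scoped Classical in
/-- The initial segment metric. -/
noncomputable def distIS {α : Type*} (W V : InfWord α) : ℝ :=
  if W = V then 0 else 1 / (1 + ((wedgeI W V).toNat : ℝ))



section AuxCPL
set_option linter.unusedSectionVars false
variable {β : Type*} [DecidableEq β]

@[simp] lemma cpl_nil_left (b : List β) : commonPrefixLength [] b = 0 := by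
  cases b <;> rfl

@[simp] lemma cpl_nil_right (a : List β) : commonPrefixLength a [] = 0 := by
  cases a <;> rfl

lemma cpl_cons (a b : β) (as bs : List β) :
    commonPrefixLength (a :: as) (b :: bs) =
      if a = b then commonPrefixLength as bs + 1 else 0 := rfl

lemma cpl_le_length_left : ∀ (a b : List β), commonPrefixLength a b ≤ a.length
  | [], b => by simp
  | a, [] => by simp
  | a :: as, b :: bs => by
    rw [cpl_cons]
    split
    · simpa using cpl_le_length_left as bs
    · simp

lemma cpl_comm : ∀ (a b : List β), commonPrefixLength a b = commonPrefixLength b a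
  | [], b => by simp
  | a, [] => by simp
  | a :: as, b :: bs => by
    rw [cpl_cons, cpl_cons, cpl_comm as bs]
    by_cases h : a = b
    · simp [h]
    · rw [if_neg h, if_neg (fun hh => h hh.symm)]

lemma cpl_le_length_right (a b : List β) : commonPrefixLength a b ≤ b.length := by
  rw [cpl_comm]; exact cpl_le_length_left b a

lemma take_cpl_eq : ∀ (a b : List β), a.take (commonPrefixLength a b) = b.take (commonPrefixLength a b)
  | [], b => by simp
  | a, [] => by simp
  | a :: as, b :: bs => by
    rw [cpl_cons]
    split
    · next h => simp [h, take_cpl_eq as bs]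
    · simp

lemma le_cpl_of_take_eq : ∀ (k : ℕ) (a b : List β), a.take k = b.take k → k ≤ a.length →
    k ≤ commonPrefixLength a b
  | 0, a, b, _, _ => Nat.zero_le _
  | k + 1, [], b, h, hl => by simp at hl
  | k + 1, a :: as, [], h, hl => by simp at h
  | k + 1, a :: as, b :: bs, h, hl => by
    simp only [List.take_succ_cons, List.cons.injEq] at h
    rw [cpl_cons, if_pos h.1]
    exact Nat.succ_le_succ (le_cpl_of_take_eq k as bs h.2 (by simpa using hl))

lemma take_eq_of_le_cpl {k : ℕ} {a b : List β} (h : k ≤ commonPrefixLength a b) :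
    a.take k = b.take k := by
  have := take_cpl_eq a b
  calc a.take k = (a.take (commonPrefixLength a b)).take k := by
        rw [List.take_take, Nat.min_eq_left h]
    _ = (b.take (commonPrefixLength a b)).take k := by rw [this]
    _ = b.take k := by rw [List.take_take, Nat.min_eq_left h]

lemma cpl_of_prefix {a b : List β} (h : a <+: b) : commonPrefixLength a b = a.length :=
  le_antisymm (cpl_le_length_left a b)
    (le_cpl_of_take_eq a.length a b (by
      rw [List.take_length]
      exact (List.prefix_iff_eq_take.mp h)) le_rfl)

lemma prefix_of_cpl_eq {a b : List β} (h : commonPrefixLength a b = a.length) : a <+: b := by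
  have := take_cpl_eq a b
  rw [h, List.take_length] at this
  exact this ▸ List.take_prefix _ _

lemma cpl_take_take {s t : ℕ} {L : List β} (h : t ≤ s) (hs : s ≤ L.length) :
    commonPrefixLength (L.take s) (L.take t) = t := by
  have hpre : L.take t <+: L.take s := by
    rw [List.prefix_take_iff]; exact ⟨List.take_prefix _ _, by rw [List.length_take]; omega⟩
  rw [cpl_comm, cpl_of_prefix hpre, List.length_take]
  exact Nat.min_eq_left (le_trans h hs)

end AuxCPL

section AuxRed
set_option linter.unusedSectionVars false


open FreeGroup
variable {α : Type*} [DecidableEq α]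

/-- A list of letters is reduced. -/
def IsRed (L : List (Letter α)) : Prop := List.IsChain (fun a b => b ≠ linv a) L

lemma isRed_nil : IsRed ([] : List (Letter α)) := List.isChain_nil

lemma IsRed.take {L : List (Letter α)} (h : IsRed L) (n : ℕ) : IsRed (L.take n) :=
  List.IsChain.take h n

lemma IsRed.drop {L : List (Letter α)} (h : IsRed L) (n : ℕ) : IsRed (L.drop n) :=
  List.IsChain.drop h n

lemma not_step_of_isRed {L L' : List (Letter α)} (h : IsRed L) : ¬ Red.Step L L' := by
  intro hs
  cases hs with
  | @not L₁ L₂ x b =>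
    have h2 := (List.isChain_append.mp h).2.1
    have := (List.isChain_cons_cons.mp h2).1
    exact this rfl

lemma reduce_eq_self_of_isRed {L : List (Letter α)} (h : IsRed L) : reduce L = L := by
  have hred : Red L (reduce L) := reduce.red
  rcases Relation.ReflTransGen.cases_head hred with heq | ⟨c, hstep, _⟩
  · exact heq.symm
  · exact absurd hstep (not_step_of_isRed h)

lemma exists_step_of_not_isRed : ∀ {L : List (Letter α)}, ¬ IsRed L → ∃ L', Red.Step L L'
  | [], h => absurd List.isChain_nil h
  | [a], h => absurd (List.isChain_singleton a) h
  | a :: b :: t, h => by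
    by_cases hab : b = linv a
    · refine ⟨t, ?_⟩
      obtain ⟨x, bb⟩ := a
      have : b = (x, !bb) := hab
      rw [this]
      exact Red.Step.cons_not
    · have : ¬ IsRed (b :: t) := by
        intro hc
        exact h (List.isChain_cons_cons.mpr ⟨hab, hc⟩)
      obtain ⟨L', hL'⟩ := exists_step_of_not_isRed this
      exact ⟨a :: L', hL'.cons⟩

lemma isRed_of_reduce_eq_self {L : List (Letter α)} (h : reduce L = L) : IsRed L := by
  by_contra hc
  obtain ⟨L', hL'⟩ := exists_step_of_not_isRed hc
  have h1 : reduce L = reduce L' := reduce.Step.eq hL'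
  have h2 : (reduce L').length ≤ L'.length := Red.length_le reduce.red
  have h3 : L'.length + 2 = L.length := hL'.length
  rw [h] at h1
  have : L.length ≤ L'.length := h1 ▸ h2
  omega

lemma isRed_toWord (g : FreeGroup α) : IsRed g.toWord :=
  isRed_of_reduce_eq_self (reduce_toWord g)

lemma toWord_mk_isRed {L : List (Letter α)} (h : IsRed L) : (mk L).toWord = L := by
  rw [toWord_mk, reduce_eq_self_of_isRed h]

lemma norm_eq_toWord_length (g : FreeGroup α) : FreeGroup.norm g = g.toWord.length := rfl

lemma norm_mk_isRed {L : List (Letter α)} (h : IsRed L) : FreeGroup.norm (mk L) = L.length := by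
  rw [norm_eq_toWord_length, toWord_mk_isRed h]

lemma isRed_invRev {L : List (Letter α)} (h : IsRed L) : IsRed (invRev L) := by
  apply isRed_of_reduce_eq_self
  rw [reduce_invRev, reduce_eq_self_of_isRed h]

lemma invRev_cons (a : Letter α) (L : List (Letter α)) :
    invRev (a :: L) = invRev L ++ [linv a] := by
  simp [invRev, linv]

/-- Key identity: `|x⁻¹y| + 2|x ∧ y| = |x| + |y|` at the level of reduced lists. -/
lemma cpi_list : ∀ (a b : List (Letter α)), IsRed a → IsRed b →
    (reduce (invRev a ++ b)).length + 2 * commonPrefixLength a b = a.length + b.length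
  | [], b, _, hb => by simp [reduce_eq_self_of_isRed hb, invRev]
  | a :: as, [], ha, _ => by
    have : IsRed (invRev (a :: as)) := isRed_invRev ha
    rw [List.append_nil, reduce_eq_self_of_isRed this]
    simp [invRev]
  | a :: as, b :: bs, ha, hb => by
    by_cases hab : a = b
    · subst hab
      have hmk : mk (invRev (a :: as) ++ (a :: bs)) = mk (invRev as ++ bs) := by
        have h1 : mk (invRev (a :: as) ++ (a :: bs)) = (mk (a :: as))⁻¹ * mk (a :: bs) := by
          rw [← mul_mk, inv_mk]
        have h2 : mk (invRev as ++ bs) = (mk as)⁻¹ * mk bs := by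
          rw [← mul_mk, inv_mk]
        rw [h1, h2]
        have h3 : mk (a :: as) = mk [a] * mk as := by rw [mul_mk]; rfl
        have h4 : mk (a :: bs) = mk [a] * mk bs := by rw [mul_mk]; rfl
        rw [h3, h4, mul_inv_rev]
        group
      have hr : reduce (invRev (a :: as) ++ (a :: bs)) = reduce (invRev as ++ bs) :=
        reduce.sound hmk
      have ih := cpi_list as bs ha.tail hb.tail
      rw [hr, cpl_cons, if_pos rfl]
      simp only [List.length_cons]
      omega
    · have hjunction : IsRed (invRev (a :: as) ++ (b :: bs)) := by
        apply List.isChain_append.mpr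
        refine ⟨isRed_invRev ha, hb, ?_⟩
        intro x hx y hy
        simp only [List.head?_cons, Option.mem_def, Option.some.injEq] at hy
        rw [invRev_cons] at hx
        rw [List.getLast?_concat] at hx
        simp only [Option.mem_def, Option.some.injEq] at hx
        subst hx
        rw [← hy]
        intro hc
        apply hab
        have : linv (linv a) = a := by simp [linv]
        rw [hc, this]
      rw [reduce_eq_self_of_isRed hjunction, cpl_cons, if_neg hab]
      have h1 : (invRev (a :: as)).length = as.length + 1 := by
        rw [invRev_length]; simp
      simp only [List.length_append, List.length_cons, h1]
      omega


end AuxRed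

section AuxGroup
set_option linter.unusedSectionVars false
open FreeGroup
variable {α : Type*} [DecidableEq α]

/-- Key identity: `|x⁻¹y| + 2|x ∧ y| = |x| + |y|`. -/
lemma cpi (x y : FreeGroup α) :
    FreeGroup.norm (x⁻¹ * y) + 2 * wedgeFF x y = FreeGroup.norm x + FreeGroup.norm y := by
  have hmk : x⁻¹ * y = mk (invRev x.toWord ++ y.toWord) := by
    conv_lhs => rw [← mk_toWord (x := x), ← mk_toWord (x := y)]
    rw [inv_mk, mul_mk]
  rw [wedgeFF, norm_eq_toWord_length, hmk, toWord_mk, norm_eq_toWord_length,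
    norm_eq_toWord_length]
  exact cpi_list _ _ (isRed_toWord x) (isRed_toWord y)

lemma wedgeFF_le_norm_left (x y : FreeGroup α) : wedgeFF x y ≤ FreeGroup.norm x :=
  cpl_le_length_left _ _

lemma wedgeFF_le_norm_right (x y : FreeGroup α) : wedgeFF x y ≤ FreeGroup.norm y :=
  cpl_le_length_right _ _

lemma norm_dist_triangle (x y z : FreeGroup α) :
    FreeGroup.norm (x⁻¹ * z) ≤ FreeGroup.norm (x⁻¹ * y) + FreeGroup.norm (y⁻¹ * z) := by
  have : x⁻¹ * z = (x⁻¹ * y) * (y⁻¹ * z) := by group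
  rw [this]
  exact norm_mul_le _ _

lemma norm_dist_comm (x y : FreeGroup α) :
    FreeGroup.norm (x⁻¹ * y) = FreeGroup.norm (y⁻¹ * x) := by
  have : y⁻¹ * x = (x⁻¹ * y)⁻¹ := by group
  rw [this, norm_inv_eq]

@[simp] lemma length_prefixList (W : InfWord α) (i : ℕ) : (prefixList W i).length = i := by
  simp [prefixList]

lemma getElem_prefixList (W : InfWord α) {i p : ℕ} (h : p < i) :
    (prefixList W i)[p]'(by simpa using h) = W.1 p := by
  simp [prefixList]

lemma take_prefixList (W : InfWord α) (j i : ℕ) :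
    (prefixList W i).take j = prefixList W (min j i) := by
  simp [prefixList, ← List.map_take, List.take_range]

lemma isRed_prefixList (W : InfWord α) (i : ℕ) : IsRed (prefixList W i) := by
  rw [IsRed, List.isChain_iff_getElem]
  intro p hp
  simp only [length_prefixList] at hp
  rw [getElem_prefixList W (by omega), getElem_prefixList W (by omega)]
  exact W.2 p

lemma toWord_wordPrefix (W : InfWord α) (i : ℕ) :
    (wordPrefix W i).toWord = prefixList W i :=
  toWord_mk_isRed (isRed_prefixList W i)

lemma norm_wordPrefix (W : InfWord α) (i : ℕ) : FreeGroup.norm (wordPrefix W i) = i := by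
  rw [norm_eq_toWord_length, toWord_wordPrefix, length_prefixList]

lemma prefixList_prefix (W : InfWord α) {j i : ℕ} (h : j ≤ i) :
    prefixList W j <+: prefixList W i := by
  have ht := take_prefixList W j i
  rw [Nat.min_eq_left h] at ht
  rw [← ht]
  exact List.take_prefix _ _

/-- `j ≤ wedgeF W g` iff the `j`-prefix of `W` is a prefix of the word of `g`. -/
lemma le_wedgeF_iff {W : InfWord α} {g : FreeGroup α} {j : ℕ} :
    j ≤ wedgeF W g ↔ prefixList W j <+: g.toWord := by
  constructor
  · intro h
    have hc := take_eq_of_le_cpl (a := prefixList W g.toWord.length) (b := g.toWord) h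
    rw [take_prefixList] at hc
    have hle : j ≤ g.toWord.length :=
      le_trans h (le_trans (cpl_le_length_right _ _) le_rfl)
    rw [Nat.min_eq_left hle] at hc
    rw [hc]
    exact List.take_prefix _ _
  · intro h
    have hle : j ≤ g.toWord.length := by
      have := h.length_le
      simpa using this
    apply le_cpl_of_take_eq
    · rw [take_prefixList, Nat.min_eq_left hle]
      have := List.prefix_iff_eq_take.mp h
      rwa [length_prefixList] at this
    · simpa using hle

lemma wedgeF_prefix {W : InfWord α} {g : FreeGroup α} :
    prefixList W (wedgeF W g) <+: g.toWord :=
  le_wedgeF_iff.mp le_rfl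

lemma convergesTo_iff {u : ℕ → FreeGroup α} {W : InfWord α} :
    ConvergesTo u W ↔ ∀ j : ℕ, ∃ N, ∀ i ≥ N, prefixList W j <+: (u i).toWord := by
  rw [ConvergesTo, tendsto_atTop_atTop]
  constructor
  · intro h j
    obtain ⟨N, hN⟩ := h j
    exact ⟨N, fun i hi => le_wedgeF_iff.mp (hN i hi)⟩
  · intro h b
    obtain ⟨N, hN⟩ := h b
    exact ⟨N, fun i hi => le_wedgeF_iff.mpr (hN i hi)⟩

/-- Splitting a group element at position `j` of its reduced word. -/
lemma split_at (g : FreeGroup α) (j : ℕ) :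
    g = mk (g.toWord.take j) * mk (g.toWord.drop j) := by
  rw [mul_mk, List.take_append_drop, mk_toWord]

lemma norm_mk_drop (g : FreeGroup α) (j : ℕ) :
    FreeGroup.norm (mk (g.toWord.drop j)) = FreeGroup.norm g - j := by
  rw [norm_mk_isRed ((isRed_toWord g).drop j), List.length_drop, norm_eq_toWord_length]

lemma norm_mk_take (g : FreeGroup α) (j : ℕ) :
    FreeGroup.norm (mk (g.toWord.take j)) = min j (FreeGroup.norm g) := by
  rw [norm_mk_isRed ((isRed_toWord g).take j), List.length_take, norm_eq_toWord_length]

lemma wordPrefix_mul (W : InfWord α) {i k : ℕ} (h : i ≤ k) :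
    wordPrefix W i * mk ((prefixList W k).drop i) = wordPrefix W k := by
  rw [wordPrefix, wordPrefix, mul_mk]
  congr 1
  have : prefixList W i = (prefixList W k).take i := by
    rw [take_prefixList, Nat.min_eq_left h]
  rw [this, List.take_append_drop]

lemma norm_wordPrefix_mul_drop (W : InfWord α) {i k : ℕ} (h : i ≤ k) :
    FreeGroup.norm (mk ((prefixList W k).drop i)) = k - i := by
  rw [norm_mk_isRed ((isRed_prefixList W k).drop i), List.length_drop, length_prefixList]

end AuxGroup

section AuxBC
set_option linter.unusedSectionVars false
open FreeGroup
variable {α : Type*} [DecidableEq α]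

lemma flip_exists (P : ℕ → Prop) (K : ℕ) (h0 : P 0) (hK : ¬ P K) :
    ∃ t, P t ∧ ¬ P (t + 1) := by
  by_contra h
  push_neg at h
  exact hK (Nat.rec h0 (fun n ih => h n ih) K)

/-- Geometric fact: if `m` is a prefix of `x` but not of `y`, then
`m` is at least as close to `y` as `x` is. -/
lemma gf {x y : FreeGroup α} {m : List (Letter α)} (hm : IsRed m)
    (hx : m <+: x.toWord) (hy : ¬ m <+: y.toWord) :
    FreeGroup.norm (y⁻¹ * mk m) ≤ FreeGroup.norm (y⁻¹ * x) := by
  set c := commonPrefixLength y.toWord m with hc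
  have hclt : c < m.length := by
    rcases Nat.lt_or_ge c m.length with h | h
    · exact h
    · exfalso
      apply hy
      apply prefix_of_cpl_eq
      rw [cpl_comm]
      exact le_antisymm (cpl_le_length_right _ _) h
  have hcxy : commonPrefixLength y.toWord x.toWord ≤ c := by
    by_contra hcon
    push_neg at hcon
    have h1 : y.toWord.take (c+1) = x.toWord.take (c+1) := take_eq_of_le_cpl hcon
    have hmx : m = x.toWord.take m.length := by
      have := List.prefix_iff_eq_take.mp hx
      exact this
    have h2 : m.take (c+1) = x.toWord.take (c+1) := by
      conv_lhs => rw [hmx]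
      rw [List.take_take, Nat.min_eq_left (by omega)]
    have h3 : y.toWord.take (c+1) = m.take (c+1) := by rw [h1, h2]
    have h4 : c + 1 ≤ commonPrefixLength y.toWord m :=
      le_cpl_of_take_eq _ _ _ h3 (le_trans hcon (cpl_le_length_left _ _))
    omega
  have e1 := cpi y (mk m)
  have e2 := cpi y x
  have hwm : wedgeFF y (mk m) = c := by
    rw [wedgeFF, toWord_mk_isRed hm, hc]
  have hnm : FreeGroup.norm (mk m) = m.length := norm_mk_isRed hm
  have hmlex : m.length ≤ FreeGroup.norm x := by
    rw [norm_eq_toWord_length]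
    exact hx.length_le
  rw [hwm, hnm] at e1
  rw [wedgeFF] at e2
  omega

lemma crossing_exists (z : ℕ → FreeGroup α) (m : List (Letter α))
    {a b : ℕ} (hab : a ≤ b) (ha : m <+: (z a).toWord) (hb : ¬ m <+: (z b).toWord) :
    ∃ t, a ≤ t ∧ t < b ∧ m <+: (z t).toWord ∧ ¬ m <+: (z (t+1)).toWord := by
  classical
  obtain ⟨t, ht1, ht2⟩ := flip_exists (fun k => m <+: (z (min (a + k) b)).toWord) (b - a)
    (by simpa [Nat.min_eq_left hab] using ha)
    (by simpa [Nat.min_eq_right (Nat.sub_le b a), Nat.add_sub_cancel' hab] using hb)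
  rcases Nat.lt_or_ge (a + t) b with h | h
  · refine ⟨a + t, Nat.le_add_right a t, h, ?_, ?_⟩
    · simpa [Nat.min_eq_left (le_of_lt h)] using ht1
    · simpa [show a + (t + 1) = a + t + 1 by omega,
        Nat.min_eq_left (show a + t + 1 ≤ b by omega)] using ht2
  · exfalso
    have e1 : min (a + t) b = b := Nat.min_eq_right h
    have e2 : min (a + (t + 1)) b = b := Nat.min_eq_right (by omega)
    rw [e1] at ht1; rw [e2] at ht2; exact ht2 ht1

lemma crossing_exists' (z : ℕ → FreeGroup α) (m : List (Letter α))
    {a b : ℕ} (hab : a ≤ b) (ha : ¬ m <+: (z a).toWord) (hb : m <+: (z b).toWord) :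
    ∃ t, a ≤ t ∧ t < b ∧ ¬ m <+: (z t).toWord ∧ m <+: (z (t+1)).toWord := by
  classical
  obtain ⟨t, ht1, ht2⟩ := flip_exists (fun k => ¬ m <+: (z (min (a + k) b)).toWord) (b - a)
    (by simpa [Nat.min_eq_left hab] using ha)
    (by simpa [Nat.min_eq_right (Nat.sub_le b a), Nat.add_sub_cancel' hab] using hb)
  push_neg at ht2
  rcases Nat.lt_or_ge (a + t) b with h | h
  · refine ⟨a + t, Nat.le_add_right a t, h, ?_, ?_⟩
    · simpa [Nat.min_eq_left (le_of_lt h)] using ht1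
    · simpa [show a + (t + 1) = a + t + 1 by omega,
        Nat.min_eq_left (show a + t + 1 ≤ b by omega)] using ht2
  · exfalso
    have e1 : min (a + t) b = b := Nat.min_eq_right h
    have e2 : min (a + (t + 1)) b = b := Nat.min_eq_right (by omega)
    rw [e1] at ht1; rw [e2] at ht2; exact ht1 ht2

variable {β : Type*} [DecidableEq β]

/-- The Lipschitz constant of a homomorphism of free groups. -/
noncomputable def lipConst [Fintype β] (f : FreeGroup β →* FreeGroup α) : ℕ :=
  Finset.univ.sup (fun b : β => FreeGroup.norm (f (FreeGroup.of b)))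

lemma norm_f_single [Fintype β] (f : FreeGroup β →* FreeGroup α) (p : Letter β) :
    FreeGroup.norm (f (mk [p])) ≤ lipConst f := by
  obtain ⟨a, bb⟩ := p
  cases bb
  · have : mk [(a, false)] = (FreeGroup.of a)⁻¹ := by
      rw [FreeGroup.of, inv_mk]
      congr 1
    rw [this, _root_.map_inv, norm_inv_eq]
    exact Finset.le_sup (f := fun b : β => FreeGroup.norm (f (FreeGroup.of b)))
      (Finset.mem_univ a)
  · have : mk [(a, true)] = FreeGroup.of a := rfl
    rw [this]
    exact Finset.le_sup (f := fun b : β => FreeGroup.norm (f (FreeGroup.of b)))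
      (Finset.mem_univ a)

lemma lip_aux [Fintype β] (f : FreeGroup β →* FreeGroup α) :
    ∀ L : List (Letter β), FreeGroup.norm (f (mk L)) ≤ lipConst f * L.length
  | [] => by
    rw [← one_eq_mk, _root_.map_one]
    simp [norm_eq_toWord_length]
  | p :: L => by
    have h1 : mk (p :: L) = mk [p] * mk L := by rw [mul_mk]; rfl
    calc FreeGroup.norm (f (mk (p :: L))) ≤
        FreeGroup.norm (f (mk [p])) + FreeGroup.norm (f (mk L)) := by
          rw [h1, _root_.map_mul]; exact norm_mul_le _ _
      _ ≤ lipConst f + lipConst f * L.length :=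
          Nat.add_le_add (norm_f_single f p) (lip_aux f L)
      _ = lipConst f * (p :: L).length := by
          simp [List.length_cons, Nat.mul_add, Nat.mul_succ]; ring

lemma lipschitz [Fintype β] (f : FreeGroup β →* FreeGroup α) (g : FreeGroup β) :
    FreeGroup.norm (f g) ≤ lipConst f * FreeGroup.norm g := by
  conv_lhs => rw [← mk_toWord (x := g)]
  rw [norm_eq_toWord_length (g := g)]
  exact lip_aux f g.toWord

lemma properness [Fintype α] (f : FreeGroup β →* FreeGroup α)
    (hinj : Function.Injective f) (N : ℕ) :
    ∃ R : ℕ, ∀ g : FreeGroup β, FreeGroup.norm (f g) ≤ N → FreeGroup.norm g ≤ R := by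
  classical
  have hball : {y : FreeGroup α | FreeGroup.norm y ≤ N}.Finite := by
    have : {y : FreeGroup α | FreeGroup.norm y ≤ N} =
        FreeGroup.toWord ⁻¹' {l : List (Letter α) | l.length ≤ N} := rfl
    rw [this]
    exact Set.Finite.preimage toWord_injective.injOn (List.finite_length_le _ N)
  have hS : {g : FreeGroup β | FreeGroup.norm (f g) ≤ N}.Finite :=
    Set.Finite.preimage hinj.injOn hball
  have himg : (FreeGroup.norm '' {g : FreeGroup β | FreeGroup.norm (f g) ≤ N}).Finite :=
    hS.image _
  obtain ⟨R, hR⟩ := himg.bddAbove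
  exact ⟨R, fun g hg => hR (Set.mem_image_of_mem _ hg)⟩

/-- **Bounded cancellation** for injective homomorphisms of free groups. -/
theorem bounded_cancellation [Fintype α] [Fintype β]
    (f : FreeGroup β →* FreeGroup α) (hinj : Function.Injective f) :
    ∃ B : ℕ, ∀ u v : FreeGroup β,
      FreeGroup.norm (u * v) = FreeGroup.norm u + FreeGroup.norm v →
      FreeGroup.norm (f u) ≤ wedgeFF (f u) (f (u * v)) + B := by
  classical
  set lam := lipConst f with hlam
  obtain ⟨R, hR⟩ := properness f hinj (2 * lam)
  refine ⟨lam * R + lam, ?_⟩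
  intro u v hred
  -- the word of `u * v` is the concatenation of those of `u` and `v`
  set L := (u * v).toWord with hL
  set nu := FreeGroup.norm u with hnu
  set N := L.length with hN
  have hNval : N = FreeGroup.norm u + FreeGroup.norm v := by
    rw [hN, hL, ← norm_eq_toWord_length, hred]
  have hprefu : u.toWord <+: L := by
    have e1 := cpi u (u * v)
    have e2 : u⁻¹ * (u * v) = v := by group
    rw [e2] at e1
    apply prefix_of_cpl_eq
    have : wedgeFF u (u * v) = FreeGroup.norm u := by omega
    rw [wedgeFF] at this
    rw [this, norm_eq_toWord_length]
  have htake_nu : L.take nu = u.toWord := by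
    have := List.prefix_iff_eq_take.mp hprefu
    rw [hnu, norm_eq_toWord_length]
    exact this.symm
  have hmk_nu : mk (L.take nu) = u := by rw [htake_nu, mk_toWord]
  -- the path
  set z : ℕ → FreeGroup α := fun t => f (u⁻¹ * mk (L.take t)) with hz
  have hz0 : z 0 = (f u)⁻¹ := by
    rw [hz]
    simp only [List.take_zero, ← one_eq_mk, mul_one, _root_.map_inv]
  have hznu : z nu = 1 := by rw [hz]; simp only [hmk_nu, inv_mul_cancel, _root_.map_one]
  have hzN : z N = f v := by
    rw [hz, hN]
    simp only [List.take_length, hL, mk_toWord]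
    congr 1
    group
  -- distances along the path
  have hinner : ∀ s t : ℕ, s ≤ t → t ≤ N →
      FreeGroup.norm ((mk (L.take s))⁻¹ * mk (L.take t)) = t - s := by
    intro s t hst htN
    have e := cpi (mk (L.take s)) (mk (L.take t))
    have hw : wedgeFF (mk (L.take s)) (mk (L.take t)) = s := by
      rw [wedgeFF, toWord_mk_isRed ((isRed_toWord _).take s),
        toWord_mk_isRed ((isRed_toWord _).take t), cpl_comm]
      exact cpl_take_take hst htN
    have htL : t ≤ L.length := le_trans htN (le_of_eq hN)
    have hns : FreeGroup.norm (mk (L.take s)) = s := by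
      rw [norm_mk_isRed ((isRed_toWord _).take s), List.length_take]
      exact Nat.min_eq_left (le_trans hst htL)
    have hnt : FreeGroup.norm (mk (L.take t)) = t := by
      rw [norm_mk_isRed ((isRed_toWord _).take t), List.length_take]
      exact Nat.min_eq_left htL
    rw [hw, hns, hnt] at e
    omega
  have hzdiff : ∀ s t : ℕ, (z s)⁻¹ * z t = f ((mk (L.take s))⁻¹ * mk (L.take t)) := by
    intro s t
    rw [hz]
    simp only [_root_.map_mul, _root_.map_inv]
    group
  have hstep : ∀ s t : ℕ, s ≤ t → t ≤ N →
      FreeGroup.norm ((z s)⁻¹ * z t) ≤ lam * (t - s) := by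
    intro s t hst htN
    rw [hzdiff]
    calc FreeGroup.norm (f ((mk (L.take s))⁻¹ * mk (L.take t)))
        ≤ lam * FreeGroup.norm ((mk (L.take s))⁻¹ * mk (L.take t)) := lipschitz f _
      _ = lam * (t - s) := by rw [hinner s t hst htN]
  -- the median
  set c := wedgeFF ((f u)⁻¹) (f v) with hc
  set m := (FreeGroup.toWord ((f u)⁻¹)).take c with hm
  have hmred : IsRed m := (isRed_toWord _).take c
  have hmlen : m.length = c := by
    rw [hm, List.length_take]
    exact Nat.min_eq_left (cpl_le_length_left _ _)
  have hmprefA : m <+: (z 0).toWord := by rw [hz0]; exact List.take_prefix _ _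
  have hmprefB : m <+: (z N).toWord := by
    rw [hzN, hm, hc, wedgeFF, take_cpl_eq]
    exact List.take_prefix _ _
  -- the two key cpi identities
  have e1 := cpi (f u) (f (u * v))
  have e2 := cpi ((f u)⁻¹) (f v)
  have e1' : (f u)⁻¹ * f (u * v) = f v := by rw [_root_.map_mul]; group
  have e2' : ((f u)⁻¹)⁻¹ * f v = f (u * v) := by rw [_root_.map_mul]; group
  rw [e1'] at e1
  rw [e2', norm_inv_eq] at e2
  rw [← hc] at e2
  -- suffices to bound c
  suffices hcB : c ≤ lam * R + lam by
    have := norm_eq_toWord_length (f (u * v))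
    omega
  by_cases hc0 : c = 0
  · omega
  have hmne : m ≠ [] := by
    intro hnil
    rw [hnil] at hmlen
    exact hc0 hmlen.symm
  have hnuN : nu ≤ N := by rw [hNval, hnu]; omega
  -- crossing on [0, nu]
  have hnopref1 : ¬ m <+: (z nu).toWord := by
    rw [hznu, toWord_one]
    intro hpre
    exact hmne (List.prefix_nil.mp hpre)
  obtain ⟨t₁, -, ht₁lt, ht₁pref, ht₁not⟩ :=
    crossing_exists z m (Nat.zero_le nu) hmprefA hnopref1
  -- crossing on [nu, N]
  obtain ⟨t₂, ht₂ge, ht₂lt, ht₂not, ht₂pref⟩ :=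
    crossing_exists' z m hnuN hnopref1 hmprefB
  set p₁ := t₁ + 1 with hp₁
  have hp₁le : p₁ ≤ nu := ht₁lt
  have hd1 : FreeGroup.norm ((z p₁)⁻¹ * mk m) ≤ lam := by
    calc FreeGroup.norm ((z p₁)⁻¹ * mk m) ≤ FreeGroup.norm ((z p₁)⁻¹ * z t₁) :=
          gf hmred ht₁pref ht₁not
      _ = FreeGroup.norm ((z t₁)⁻¹ * z p₁) := norm_dist_comm _ _
      _ ≤ lam * (p₁ - t₁) := hstep t₁ p₁ (Nat.le_succ t₁) (le_trans hp₁le hnuN)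
      _ = lam := by rw [show p₁ - t₁ = 1 by omega, Nat.mul_one]
  have hd2 : FreeGroup.norm ((z t₂)⁻¹ * mk m) ≤ lam := by
    calc FreeGroup.norm ((z t₂)⁻¹ * mk m) ≤ FreeGroup.norm ((z t₂)⁻¹ * z (t₂ + 1)) :=
          gf hmred ht₂pref ht₂not
      _ ≤ lam * (t₂ + 1 - t₂) := hstep t₂ (t₂ + 1) (Nat.le_succ t₂) ht₂lt
      _ = lam := by rw [show t₂ + 1 - t₂ = 1 by omega, Nat.mul_one]
  -- p₂ - p₁ is bounded by R
  have hdist12 : FreeGroup.norm ((z p₁)⁻¹ * z t₂) ≤ 2 * lam := by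
    calc FreeGroup.norm ((z p₁)⁻¹ * z t₂)
        ≤ FreeGroup.norm ((z p₁)⁻¹ * mk m) + FreeGroup.norm ((mk m)⁻¹ * z t₂) :=
          norm_dist_triangle _ _ _
      _ = FreeGroup.norm ((z p₁)⁻¹ * mk m) + FreeGroup.norm ((z t₂)⁻¹ * mk m) := by
          rw [norm_dist_comm (mk m) (z t₂)]
      _ ≤ lam + lam := Nat.add_le_add hd1 hd2
      _ = 2 * lam := by ring
  have hp₁t₂ : p₁ ≤ t₂ := le_trans hp₁le ht₂ge
  have ht₂N : t₂ ≤ N := le_of_lt ht₂lt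
  have hgap : t₂ - p₁ ≤ R := by
    have h1 : FreeGroup.norm (f ((mk (L.take p₁))⁻¹ * mk (L.take t₂))) ≤ 2 * lam := by
      rw [← hzdiff]; exact hdist12
    have h2 := hR _ h1
    rw [hinner p₁ t₂ hp₁t₂ ht₂N] at h2
    exact h2
  -- conclude
  have hcnorm : FreeGroup.norm (mk m) = c := by rw [norm_mk_isRed hmred, hmlen]
  have hfinal : FreeGroup.norm (mk m) ≤ FreeGroup.norm (z p₁) + lam := by
    calc FreeGroup.norm (mk m) = FreeGroup.norm ((1 : FreeGroup α)⁻¹ * mk m) := by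
          rw [inv_one, one_mul]
      _ ≤ FreeGroup.norm ((1 : FreeGroup α)⁻¹ * z p₁) + FreeGroup.norm ((z p₁)⁻¹ * mk m) :=
          norm_dist_triangle _ _ _
      _ ≤ FreeGroup.norm (z p₁) + lam := by
          rw [inv_one, one_mul]
          exact Nat.add_le_add le_rfl hd1
  have hzp₁ : FreeGroup.norm (z p₁) ≤ lam * (nu - p₁) := by
    have : z p₁ = (z nu)⁻¹ * z p₁ := by rw [hznu, inv_one, one_mul]
    rw [this, norm_dist_comm]
    exact hstep p₁ nu hp₁le hnuN
  have hmono : lam * (nu - p₁) ≤ lam * R := by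
    apply Nat.mul_le_mul_left
    omega
  omega
end AuxBC

section AuxLimit
set_option linter.unusedSectionVars false
open FreeGroup
variable {α : Type*} [DecidableEq α] {β : Type*} [DecidableEq β]

lemma bc_cpl (f : FreeGroup β →* FreeGroup α) {B : ℕ}
    (hBC : ∀ u v : FreeGroup β, FreeGroup.norm (u * v) = FreeGroup.norm u + FreeGroup.norm v →
      FreeGroup.norm (f u) ≤ wedgeFF (f u) (f (u * v)) + B)
    (W : InfWord β) {i k : ℕ} (hik : i ≤ k) :
    FreeGroup.norm (f (wordPrefix W i)) ≤
      wedgeFF (f (wordPrefix W i)) (f (wordPrefix W k)) + B := by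
  have h1 := wordPrefix_mul W hik
  have hnorm : FreeGroup.norm (wordPrefix W i * mk ((prefixList W k).drop i)) =
      FreeGroup.norm (wordPrefix W i) + FreeGroup.norm (mk ((prefixList W k).drop i)) := by
    rw [h1, norm_wordPrefix, norm_wordPrefix, norm_wordPrefix_mul_drop W hik]
    omega
  have := hBC (wordPrefix W i) (mk ((prefixList W k).drop i)) hnorm
  rwa [h1] at this

lemma tendsto_norm_f_prefix [Fintype α] (f : FreeGroup β →* FreeGroup α)
    (hinj : Function.Injective f) (W : InfWord β) :
    Tendsto (fun i => FreeGroup.norm (f (wordPrefix W i))) atTop atTop := by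
  rw [tendsto_atTop]
  intro b
  obtain ⟨R, hR⟩ := properness f hinj b
  rw [eventually_atTop]
  refine ⟨R + b + 1, fun i hi => ?_⟩
  by_contra hcon
  push_neg at hcon
  have h1 := hR (wordPrefix W i) (by omega)
  rw [norm_wordPrefix] at h1
  omega

/-- The common stable prefix: `W'` agrees with `f(W_i)` up to `|f(W_i)| - B`. -/
lemma stable_prefix (f : FreeGroup β →* FreeGroup α) {B : ℕ}
    (hBC : ∀ u v : FreeGroup β, FreeGroup.norm (u * v) = FreeGroup.norm u + FreeGroup.norm v →
      FreeGroup.norm (f u) ≤ wedgeFF (f u) (f (u * v)) + B)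
    {W : InfWord β} {W' : InfWord α}
    (hconv : ConvergesTo (fun i => f (wordPrefix W i)) W') :
    ∀ i L, L + B ≤ FreeGroup.norm (f (wordPrefix W i)) →
      prefixList W' L = (FreeGroup.toWord (f (wordPrefix W i))).take L := by
  intro i L hL
  obtain ⟨N, hN⟩ := convergesTo_iff.mp hconv L
  set k := max i N with hk
  have hik : i ≤ k := le_max_left _ _
  have hcpl := bc_cpl f hBC W hik
  have hLle : L ≤ wedgeFF (f (wordPrefix W i)) (f (wordPrefix W k)) := by omega
  have htake : (FreeGroup.toWord (f (wordPrefix W i))).take L =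
      (FreeGroup.toWord (f (wordPrefix W k))).take L := take_eq_of_le_cpl hLle
  have hpre : prefixList W' L <+: (f (wordPrefix W k)).toWord := hN k (le_max_right _ _)
  have h1 := List.prefix_iff_eq_take.mp hpre
  rw [length_prefixList] at h1
  rw [htake, ← h1]

/-- Existence of the limit infinite word of `f(W_i)`. -/
lemma exists_limit (f : FreeGroup β →* FreeGroup α) {B : ℕ}
    (hBC : ∀ u v : FreeGroup β, FreeGroup.norm (u * v) = FreeGroup.norm u + FreeGroup.norm v →
      FreeGroup.norm (f u) ≤ wedgeFF (f u) (f (u * v)) + B)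
    (W : InfWord β)
    (hl : Tendsto (fun i => FreeGroup.norm (f (wordPrefix W i))) atTop atTop) :
    ∃ W' : InfWord α, ConvergesTo (fun i => f (wordPrefix W i)) W' := by
  classical
  have hex : ∀ p : ℕ, ∃ N, ∀ k ≥ N, p + B + 1 ≤ FreeGroup.norm (f (wordPrefix W k)) := by
    intro p
    exact eventually_atTop.mp (tendsto_atTop.mp hl (p + B + 1))
  choose I₀ hI₀ using hex
  set I : ℕ → ℕ := fun p => Nat.rec (I₀ 0) (fun q ih => max ih (I₀ (q + 1))) p with hI
  have hImono : Monotone I := monotone_nat_of_le_succ (fun p => le_max_left _ _)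
  have hI₀le : ∀ p, I₀ p ≤ I p := by
    intro p
    cases p with
    | zero => exact le_rfl
    | succ q => exact le_max_right _ _
  have hIbig : ∀ p k, I p ≤ k → p + B + 1 ≤ FreeGroup.norm (f (wordPrefix W k)) :=
    fun p k hk => hI₀ p k (le_trans (hI₀le p) hk)
  have hlen : ∀ p k, I (p + 1) ≤ k → p < (FreeGroup.toWord (f (wordPrefix W k))).length := by
    intro p k hk
    have := hIbig (p + 1) k hk
    rw [← norm_eq_toWord_length]
    omega
  have agree : ∀ j k, I j ≤ k →
      (FreeGroup.toWord (f (wordPrefix W k))).take j =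
        (FreeGroup.toWord (f (wordPrefix W (I j)))).take j := by
    intro j k hk
    have hcpl := bc_cpl f hBC W (i := I j) (k := k) hk
    have hj : j ≤ wedgeFF (f (wordPrefix W (I j))) (f (wordPrefix W k)) := by
      have := hIbig j (I j) le_rfl
      omega
    exact (take_eq_of_le_cpl hj).symm
  -- the letters of the limit word
  set w : ℕ → Letter α :=
    fun p => (FreeGroup.toWord (f (wordPrefix W (I (p + 1)))))[p]'(hlen p (I (p+1)) le_rfl)
    with hw
  have hw_eq : ∀ p j k (hpj : p < j) (hk : I j ≤ k),
      (FreeGroup.toWord (f (wordPrefix W k)))[p]'(hlen p k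
        (le_trans (hImono (by omega : p + 1 ≤ j)) hk)) = w p := by
    intro p j k hpj hk
    have hIpk : I (p + 1) ≤ k := le_trans (hImono (by omega : p + 1 ≤ j)) hk
    have h1 := agree (p + 1) k hIpk
    have h2 : ∀ (LL MM : List (Letter α)) (hLM : LL.take (p+1) = MM.take (p+1))
        (hL : p < LL.length) (hM : p < MM.length), LL[p] = MM[p] := by
      intro LL MM hLM hL hM
      have e1 : (LL.take (p+1))[p]'(by rw [List.length_take]; omega) = LL[p] :=
        List.getElem_take
      have e2 : (MM.take (p+1))[p]'(by rw [List.length_take]; omega) = MM[p] :=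
        List.getElem_take
      rw [← e1, ← e2]
      congr 1
    exact h2 _ _ h1 (hlen p k hIpk) (hlen p (I (p+1)) le_rfl)
  have hred : ∀ p, w (p + 1) ≠ linv (w p) := by
    intro p
    have hk := le_rfl (a := I (p + 2))
    have h1 := hw_eq p (p + 2) (I (p + 2)) (by omega) le_rfl
    have h2 := hw_eq (p + 1) (p + 2) (I (p + 2)) (by omega) le_rfl
    rw [← h1, ← h2]
    have hch : IsRed (FreeGroup.toWord (f (wordPrefix W (I (p + 2))))) := isRed_toWord _
    rw [IsRed, List.isChain_iff_getElem] at hch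
    have := hch p (by
      have := hlen (p + 1) (I (p + 2)) le_rfl
      omega)
    simpa using this
  refine ⟨⟨w, hred⟩, ?_⟩
  apply convergesTo_iff.mpr
  intro j
  refine ⟨I j, fun i hi => ?_⟩
  have hplj : prefixList ⟨w, hred⟩ j = (FreeGroup.toWord (f (wordPrefix W i))).take j := by
    apply List.ext_getElem
    · delta prefixList; rw [List.length_map, List.length_range, List.length_take]
      have := hIbig j i hi
      rw [← norm_eq_toWord_length] at *
      omega
    · intro p hp1 hp2
      have hp1 : p < j := lt_of_lt_of_eq hp1 (by delta prefixList; rw [List.length_map, List.length_range])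
      have e1 : (prefixList ⟨w, hred⟩ j)[p]'(by delta prefixList; rw [List.length_map, List.length_range]; exact hp1) = w p :=
        getElem_prefixList _ hp1
      have e2 : ((FreeGroup.toWord (f (wordPrefix W i))).take j)[p]'hp2 =
          (FreeGroup.toWord (f (wordPrefix W i)))[p]'(hlen p i
            (le_trans (hImono (by omega : p + 1 ≤ j)) hi)) := List.getElem_take
      rw [e1, e2]
      exact (hw_eq p j i hp1 hi).symm
  rw [hplj]
  exact List.take_prefix _ _

end AuxLimit

/-- Fact 2, Morphism: if `h ∘ φ = ψ ∘ h` with all maps injective,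
then `h(fix φ) ⊆ fix ψ` and `W ↦ h̄(W)` is a well-defined injection from attracting
fixed words of `φ` to those of `ψ`. -/
theorem stmt12 {m n : ℕ} (h : FreeGroup (Fin m) →* FreeGroup (Fin n))
    (hh : Function.Injective h)
    (φ : FreeGroup (Fin m) →* FreeGroup (Fin m))
    (ψ : FreeGroup (Fin n) →* FreeGroup (Fin n))
    (hφ : Function.Injective φ) (hψ : Function.Injective ψ)
    (hcomm : h.comp φ = ψ.comp h) :
    Subgroup.map h (fixedSubgroup φ) ≤ fixedSubgroup ψ ∧
    (∀ W : InfWord (Fin m), IsAttractingFixedWord φ W →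
      ∃ W' : InfWord (Fin n), ConvergesTo (fun i => h (wordPrefix W i)) W' ∧
        IsAttractingFixedWord ψ W') ∧
    (∀ (W V : InfWord (Fin m)) (W' V' : InfWord (Fin n)),
      IsAttractingFixedWord φ W → IsAttractingFixedWord φ V →
      ConvergesTo (fun i => h (wordPrefix W i)) W' →
      ConvergesTo (fun i => h (wordPrefix V i)) V' →
      W' = V' → W = V) := by
  classical
  have hcm : ∀ x, ψ (h x) = h (φ x) := by
    intro x
    have := DFunLike.congr_fun hcomm x
    simp only [MonoidHom.comp_apply] at this
    exact this.symm
  have part1 : Subgroup.map h (fixedSubgroup φ) ≤ fixedSubgroup ψ := by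
    rintro x ⟨g, hg, rfl⟩
    have hgfix : φ g = g := hg
    show ψ (h g) = h g
    rw [hcm g, hgfix]
  obtain ⟨Bh, hBCh⟩ := bounded_cancellation h hh
  obtain ⟨Bψ, hBCψ⟩ := bounded_cancellation ψ hψ
  set lam := lipConst h with hlamdef
  set lamψ := lipConst ψ with hlamψdef
  have hℓ0 : ∀ (W : InfWord (Fin m)), FreeGroup.norm (h (wordPrefix W 0)) = 0 := by
    intro W
    have : wordPrefix W 0 = 1 := by
      rw [wordPrefix]
      have : prefixList W 0 = [] := by simp [prefixList]
      rw [this, ← FreeGroup.one_eq_mk]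
    rw [this, _root_.map_one, FreeGroup.norm_one]
  have hstepW : ∀ (W : InfWord (Fin m)) (a : ℕ), a ≠ 0 →
      FreeGroup.norm (h (wordPrefix W a)) ≤ FreeGroup.norm (h (wordPrefix W (a - 1))) + lam := by
    intro W a ha
    have h1 := wordPrefix_mul W (show a - 1 ≤ a by omega)
    calc FreeGroup.norm (h (wordPrefix W a))
        = FreeGroup.norm (h (wordPrefix W (a-1)) * h (FreeGroup.mk ((prefixList W a).drop (a-1)))) := by
          rw [← _root_.map_mul, h1]
      _ ≤ FreeGroup.norm (h (wordPrefix W (a-1))) +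
          FreeGroup.norm (h (FreeGroup.mk ((prefixList W a).drop (a-1)))) := FreeGroup.norm_mul_le _ _
      _ ≤ FreeGroup.norm (h (wordPrefix W (a-1))) + lam := by
          have h2 := lipschitz h (FreeGroup.mk ((prefixList W a).drop (a-1)))
          have h3 : FreeGroup.norm (FreeGroup.mk ((prefixList W a).drop (a-1))) = 1 := by
            rw [norm_wordPrefix_mul_drop W (show a - 1 ≤ a by omega)]
            omega
          rw [h3, Nat.mul_one] at h2
          omega
  have part2 : ∀ W : InfWord (Fin m), IsAttractingFixedWord φ W →
      ∃ W' : InfWord (Fin n), ConvergesTo (fun i => h (wordPrefix W i)) W' ∧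
        IsAttractingFixedWord ψ W' := by
    intro W hatt
    have hltop := tendsto_norm_f_prefix h hh W
    obtain ⟨W', hconv⟩ := exists_limit h hBCh W hltop
    refine ⟨W', hconv, ?_⟩
    have hdtop : ∀ T : ℕ, ∃ N, ∀ i ≥ N, i + T ≤ wedgeF W (φ (wordPrefix W i)) := by
      intro T
      have h1 := tendsto_atTop.mp hatt.2 (T : ℤ)
      rw [eventually_atTop] at h1
      obtain ⟨N, hN⟩ := h1
      refine ⟨N, fun i hi => ?_⟩
      have := hN i hi
      omega
    have hKE : ∀ T : ℕ, ∃ J, ∀ j ≥ J, j + T ≤ wedgeF W' (ψ (wordPrefix W' j)) := by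
      intro T
      set X := lamψ * (Bh + lam) with hX
      set E := Bψ + 3 * Bh + X + T with hE
      obtain ⟨R, hR⟩ := properness h hh E
      obtain ⟨N₁, hN₁⟩ := hdtop (R + 1)
      set Mx := (Finset.range (N₁ + 1)).sup
        (fun a => FreeGroup.norm (h (wordPrefix W a))) with hMx
      refine ⟨Mx + Bh + 2, fun j hj => ?_⟩
      have hj1 : 1 ≤ j := by omega
      have hexi : ∃ a, j + Bh ≤ FreeGroup.norm (h (wordPrefix W a)) :=
        (tendsto_atTop.mp hltop (j + Bh)).exists
      set i := Nat.find hexi with hidef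
      have hA : j + Bh ≤ FreeGroup.norm (h (wordPrefix W i)) := Nat.find_spec hexi
      have hipos : i ≠ 0 := by
        intro h0
        rw [h0, hℓ0 W] at hA
        omega
      have hB : FreeGroup.norm (h (wordPrefix W i)) ≤ j + Bh + lam := by
        have hmin := Nat.find_min hexi (m := i - 1) (by omega)
        push_neg at hmin
        have := hstepW W i hipos
        omega
      have hiN₁ : N₁ ≤ i := by
        by_contra hcon
        push_neg at hcon
        have hmem : i ∈ Finset.range (N₁ + 1) := Finset.mem_range.mpr (by omega)
        have : FreeGroup.norm (h (wordPrefix W i)) ≤ Mx :=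
          Finset.le_sup (f := fun a => FreeGroup.norm (h (wordPrefix W a))) hmem
        omega
      set di := wedgeF W (φ (wordPrefix W i)) with hdi_def
      have hdi : i + (R + 1) ≤ di := hN₁ i hiN₁
      -- the tail t from i to di
      set t := FreeGroup.mk ((prefixList W di).drop i) with ht
      have hWt : wordPrefix W i * t = wordPrefix W di := wordPrefix_mul W (by omega)
      have hnt : FreeGroup.norm t = di - i := norm_wordPrefix_mul_drop W (by omega)
      have hht : E + 1 ≤ FreeGroup.norm (h t) := by
        by_contra hcon
        push_neg at hcon
        have := hR t (by omega)
        omega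
      have hlen2 : FreeGroup.norm (h t) +
          2 * wedgeFF (h (wordPrefix W i)) (h (wordPrefix W di))
          = FreeGroup.norm (h (wordPrefix W i)) + FreeGroup.norm (h (wordPrefix W di)) := by
        have e := cpi (h (wordPrefix W i)) (h (wordPrefix W di))
        have e2 : (h (wordPrefix W i))⁻¹ * h (wordPrefix W di) = h t := by
          rw [← _root_.map_inv, ← _root_.map_mul]
          congr 1
          rw [← hWt]
          group
        rw [e2] at e
        exact e
      have hBCt := bc_cpl h hBCh W (i := i) (k := di) (by omega)
      have hwle : wedgeFF (h (wordPrefix W i)) (h (wordPrefix W di)) ≤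
          FreeGroup.norm (h (wordPrefix W i)) := wedgeFF_le_norm_left _ _
      -- split h(W_i) at j
      have hsplit : prefixList W' j = (FreeGroup.toWord (h (wordPrefix W i))).take j :=
        stable_prefix h hBCh hconv i j (by omega)
      set s := FreeGroup.mk ((FreeGroup.toWord (h (wordPrefix W i))).drop j) with hs
      have hWs : wordPrefix W' j * s = h (wordPrefix W i) := by
        rw [wordPrefix, hsplit, hs, FreeGroup.mul_mk, List.take_append_drop,
          FreeGroup.mk_toWord]
      have hnums : FreeGroup.norm s = FreeGroup.norm (h (wordPrefix W i)) - j :=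
        norm_mk_drop _ j
      have hnorms_add : FreeGroup.norm (wordPrefix W' j * s) =
          FreeGroup.norm (wordPrefix W' j) + FreeGroup.norm s := by
        rw [hWs, norm_wordPrefix, hnums]
        omega
      have hψs : FreeGroup.norm (ψ s) ≤ X := by
        calc FreeGroup.norm (ψ s) ≤ lamψ * FreeGroup.norm s := lipschitz ψ s
          _ ≤ lamψ * (Bh + lam) := Nat.mul_le_mul_left _ (by omega)
          _ = X := hX.symm
      have hcmi : ψ (h (wordPrefix W i)) = h (φ (wordPrefix W i)) := hcm _
      have hBC2 := hBCψ (wordPrefix W' j) s hnorms_add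
      rw [hWs, hcmi] at hBC2
      have hmulφ : h (φ (wordPrefix W i)) = ψ (wordPrefix W' j) * ψ s := by
        rw [← _root_.map_mul, hWs, hcmi]
      have hupper : FreeGroup.norm (h (φ (wordPrefix W i))) ≤
          FreeGroup.norm (ψ (wordPrefix W' j)) + FreeGroup.norm (ψ s) := by
        rw [hmulφ]
        exact FreeGroup.norm_mul_le _ _
      -- split φ(W_i) at di
      have hdpref : prefixList W di <+: (φ (wordPrefix W i)).toWord := by
        apply le_wedgeF_iff.mp
        rw [hdi_def]
      have hdlen : di ≤ FreeGroup.norm (φ (wordPrefix W i)) := by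
        rw [norm_eq_toWord_length]
        have := hdpref.length_le
        simpa using this
      set r := FreeGroup.mk ((φ (wordPrefix W i)).toWord.drop di) with hr
      have htakedi : prefixList W di = (φ (wordPrefix W i)).toWord.take di := by
        have h1 := List.prefix_iff_eq_take.mp hdpref
        rwa [length_prefixList] at h1
      have hPr : wordPrefix W di * r = φ (wordPrefix W i) := by
        rw [wordPrefix, htakedi, hr, FreeGroup.mul_mk, List.take_append_drop,
          FreeGroup.mk_toWord]
      have hnorms_Pr : FreeGroup.norm (wordPrefix W di * r) =
          FreeGroup.norm (wordPrefix W di) + FreeGroup.norm r := by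
        rw [hPr, norm_wordPrefix, hr, norm_mk_drop]
        omega
      have hBC3 := hBCh (wordPrefix W di) r hnorms_Pr
      rw [hPr] at hBC3
      have hc1le : wedgeFF (h (wordPrefix W di)) (h (φ (wordPrefix W i))) ≤
          FreeGroup.norm (h (φ (wordPrefix W i))) := wedgeFF_le_norm_right _ _
      set c2 := wedgeFF (ψ (wordPrefix W' j)) (h (φ (wordPrefix W i))) with hc2
      set M := min (FreeGroup.norm (h (wordPrefix W di)) - Bh) c2 with hM
      have harith1 : M + Bh ≤ FreeGroup.norm (h (wordPrefix W di)) := by omega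
      have harith2 : M ≤ wedgeFF (h (wordPrefix W di)) (h (φ (wordPrefix W i))) := by omega
      have hst1 : prefixList W' M = (FreeGroup.toWord (h (wordPrefix W di))).take M :=
        stable_prefix h hBCh hconv di M harith1
      have hst2 : (FreeGroup.toWord (h (wordPrefix W di))).take M =
          (FreeGroup.toWord (h (φ (wordPrefix W i)))).take M :=
        take_eq_of_le_cpl harith2
      have hst3 : (FreeGroup.toWord (ψ (wordPrefix W' j))).take M =
          (FreeGroup.toWord (h (φ (wordPrefix W i)))).take M :=
        take_eq_of_le_cpl (min_le_right _ _)
      have hfin : prefixList W' M <+: (ψ (wordPrefix W' j)).toWord := by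
        rw [hst1, hst2, ← hst3]
        exact List.take_prefix _ _
      have hMle := le_wedgeF_iff.mpr hfin
      omega
    constructor
    · rw [IsFixedInfWord, tendsto_atTop]
      intro b
      obtain ⟨J, hJ⟩ := hKE b
      rw [eventually_atTop]
      exact ⟨J, fun j hj => by have := hJ j hj; omega⟩
    · rw [tendsto_atTop]
      intro b
      obtain ⟨J, hJ⟩ := hKE b.toNat
      rw [eventually_atTop]
      refine ⟨J, fun j hj => ?_⟩
      have := hJ j hj
      have hb := Int.self_le_toNat b
      have hcast : (j : ℤ) + (b.toNat : ℤ) ≤ (wedgeF W' (ψ (wordPrefix W' j)) : ℤ) := by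
        exact_mod_cast this
      omega
  refine ⟨part1, part2, ?_⟩
  intro W V W' V' _ _ hcW hcV hWV
  subst hWV
  have key : ∀ j, prefixList W j = prefixList V j := by
    intro j
    obtain ⟨R, hR⟩ := properness h hh (2 * Bh + lam)
    have hWtop := tendsto_norm_f_prefix h hh W
    have hVtop := tendsto_norm_f_prefix h hh V
    obtain ⟨N, hN⟩ := eventually_atTop.mp (tendsto_atTop.mp hWtop (Bh + 1))
    set i := max (j + R) N with hi
    have hiBh : Bh + 1 ≤ FreeGroup.norm (h (wordPrefix W i)) := hN i (le_max_right _ _)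
    have hexk : ∃ a, FreeGroup.norm (h (wordPrefix W i)) ≤
        FreeGroup.norm (h (wordPrefix V a)) :=
      (tendsto_atTop.mp hVtop (FreeGroup.norm (h (wordPrefix W i)))).exists
    set k := Nat.find hexk with hkdef
    have hk1 : FreeGroup.norm (h (wordPrefix W i)) ≤ FreeGroup.norm (h (wordPrefix V k)) :=
      Nat.find_spec hexk
    have hk2 : FreeGroup.norm (h (wordPrefix V k)) ≤
        FreeGroup.norm (h (wordPrefix W i)) + lam := by
      have hkpos : k ≠ 0 := by
        intro h0
        rw [h0, hℓ0 V] at hk1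
        omega
      have hmin := Nat.find_min hexk (m := k - 1) (by omega)
      push_neg at hmin
      have := hstepW V k hkpos
      omega
    set L := FreeGroup.norm (h (wordPrefix W i)) - Bh with hL
    have hstW : prefixList W' L = (FreeGroup.toWord (h (wordPrefix W i))).take L :=
      stable_prefix h hBCh hcW i L (by omega)
    have hstV : prefixList W' L = (FreeGroup.toWord (h (wordPrefix V k))).take L :=
      stable_prefix h hBCh hcV k L (by omega)
    have hcplWV : L ≤ wedgeFF (h (wordPrefix W i)) (h (wordPrefix V k)) := by
      apply le_cpl_of_take_eq
      · rw [← hstW, hstV]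
      · rw [← norm_eq_toWord_length]
        omega
    have e1 := cpi (h (wordPrefix W i)) (h (wordPrefix V k))
    have e1' : (h (wordPrefix W i))⁻¹ * h (wordPrefix V k) =
        h ((wordPrefix W i)⁻¹ * wordPrefix V k) := by
      rw [_root_.map_mul, _root_.map_inv]
    rw [e1'] at e1
    have hwub := wedgeFF_le_norm_left (h (wordPrefix W i)) (h (wordPrefix V k))
    have hsmall : FreeGroup.norm (h ((wordPrefix W i)⁻¹ * wordPrefix V k)) ≤
        2 * Bh + lam := by omega
    have hgR := hR _ hsmall
    have e2 := cpi (wordPrefix W i) (wordPrefix V k)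
    rw [norm_wordPrefix, norm_wordPrefix] at e2
    have hwed : wedgeFF (wordPrefix W i) (wordPrefix V k) ≤ k := by
      rw [wedgeFF, toWord_wordPrefix, toWord_wordPrefix]
      have := cpl_le_length_right (prefixList W i) (prefixList V k)
      simpa using this
    have hij : j + R ≤ i := le_max_left _ _
    have hjle : j ≤ wedgeFF (wordPrefix W i) (wordPrefix V k) := by omega
    have hjk : j ≤ k := le_trans hjle hwed
    have htak : (prefixList W i).take j = (prefixList V k).take j := by
      apply take_eq_of_le_cpl
      rw [wedgeFF, toWord_wordPrefix, toWord_wordPrefix] at hjle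
      exact hjle
    rw [take_prefixList, take_prefixList, Nat.min_eq_left (by omega : j ≤ i),
      Nat.min_eq_left hjk] at htak
    exact htak
  apply Subtype.ext
  funext p
  have hkey := key (p + 1)
  have e1 : (prefixList W (p+1))[p]'(by rw [length_prefixList]; omega) = W.1 p :=
    getElem_prefixList _ (by omega)
  have e2 : (prefixList V (p+1))[p]'(by rw [length_prefixList]; omega) = V.1 p :=
    getElem_prefixList _ (by omega)
  rw [← e1, ← e2]
  congr 1


end ZZFix
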